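/- arXiv:1904.05959 — 5 statements merged into one kernel-verified Lean document; each statement's English description precedes it below -/
import Mathlib

section
/- For every damping ratio ζ with 0.613 ≤ ζ < 1, the ellipse approximating the cardioid is horizontally oriented: its real semi-axis exceeds its imaginary semi-axis, i.e., a(ζ) > b(ζ), where a(ζ) = e^{−β/tan β} cos β + e^{−π/tan β}, b(ζ) = e^{−β/tan β} sin β and β = arccos ζ. -/
set_option maxHeartbeats 2000000
set_option linter.deprecated false
set_option linter.unusedVariables false
open Real Complex Finset


theorem my_cos_lb {x : ℝ} (h0 : 0 ≤ x) (h1 : x ≤ 1) :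
    1 - x^2/2 + x^4/24 - x^6/720 + x^8/40320 - x^10/3628800 - x^11 * (12 / 439084800)
      ≤ Real.cos x := by
  have hb := Complex.exp_bound (x := (x : ℂ) * Complex.I)
    (by simpa [Complex.norm_real, _root_.abs_of_nonneg h0] using h1) (n := 11) (by norm_num)
  have hre : ((Complex.exp ((x:ℂ) * Complex.I)
      - ∑ m ∈ range 11, ((x:ℂ) * Complex.I) ^ m / m.factorial)).re
      = Real.cos x - (1 - x^2/2 + x^4/24 - x^6/720 + x^8/40320 - x^10/3628800) := by
    rw [Complex.sub_re, Complex.exp_ofReal_mul_I_re]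
    norm_num [Finset.sum_range_succ, Nat.factorial, mul_pow, pow_succ]
    ring
  have habs := Complex.abs_re_le_norm ((Complex.exp ((x:ℂ) * Complex.I)
      - ∑ m ∈ range 11, ((x:ℂ) * Complex.I) ^ m / m.factorial))
  rw [hre] at habs
  have h2 : ‖(x:ℂ) * Complex.I‖ = x := by simp [Complex.norm_real, _root_.abs_of_nonneg h0]
  rw [h2] at hb
  have h3 : x ^ 11 * ((Nat.succ 11 : ℕ) * (((Nat.factorial 11 : ℕ) : ℝ) * (11:ℕ))⁻¹)
      = x^11 * (12/439084800) := by norm_num [Nat.factorial]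
  nlinarith [abs_nonneg (Real.cos x - (1 - x^2/2 + x^4/24 - x^6/720 + x^8/40320 - x^10/3628800)),
    le_abs_self (Real.cos x - (1 - x^2/2 + x^4/24 - x^6/720 + x^8/40320 - x^10/3628800)),
    neg_abs_le (Real.cos x - (1 - x^2/2 + x^4/24 - x^6/720 + x^8/40320 - x^10/3628800))]


theorem my_exp_ub {x : ℝ} (h0 : 0 ≤ x) (h1 : x ≤ 1) :
    Real.exp x ≤ 1 + x + x^2/2 + x^3/6 + x^4/24 + x^5/120 + x^6/720 + x^7/5040 + x^8/35840 := by
  have h := Real.exp_bound' h0 h1 (n := 8) (by norm_num)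
  calc Real.exp x ≤ _ := h
    _ = 1 + x + x^2/2 + x^3/6 + x^4/24 + x^5/120 + x^6/720 + x^7/5040 + x^8/35840 := by
      norm_num [Finset.sum_range_succ, Nat.factorial]
      ring

theorem key_step (ζ p q σ τ l A B : ℝ)
    (hp0 : 0 < p) (hσ0 : 0 < σ) (hτ0 : 0 < τ) (hσp : p < σ)
    (h1 : p ≤ ζ) (h2 : ζ ≤ q) (hq1 : q < 1)
    (hσ : 1 - p^2 ≤ σ^2) (hτ : τ^2 ≤ 1 - q^2)
    (hl0 : 0 ≤ l) (hl1 : l ≤ 1)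
    (hcos : q ≤ Real.cos l)
    (hA : 3.141593 * q ≤ A * τ)
    (hB : B * σ ≤ l * p)
    (hE : Real.exp (A - B) * (σ - p) < 1) :
    Real.exp (-(Real.arccos ζ * (ζ / Real.sqrt (1 - ζ^2)))) * (Real.sqrt (1 - ζ^2) - ζ)
      < Real.exp (-(Real.pi * (ζ / Real.sqrt (1 - ζ^2)))) := by
  have hζ0 : 0 < ζ := lt_of_lt_of_le hp0 h1
  have hζ1 : ζ < 1 := lt_of_le_of_lt h2 hq1
  have hs2 : Real.sqrt (1 - ζ^2) ^ 2 = 1 - ζ^2 := Real.sq_sqrt (by nlinarith)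
  have hs0 : 0 < Real.sqrt (1 - ζ^2) := Real.sqrt_pos.2 (by nlinarith)
  set s := Real.sqrt (1 - ζ^2) with hs
  have hsσ : s ≤ σ := by nlinarith
  have hτs : τ ≤ s := by nlinarith
  -- l ≤ arccos ζ
  have hπ1 : (1:ℝ) ≤ Real.pi := by linarith [Real.pi_gt_three]
  have hβl : l ≤ Real.arccos ζ := by
    have hq0 : -1 ≤ q := by linarith
    have h₁ : l ≤ Real.arccos q := by
      by_contra hcon
      push_neg at hcon
      have := Real.cos_lt_cos_of_nonneg_of_le_pi (Real.arccos_nonneg q) (le_trans hl1 hπ1) hcon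
      rw [Real.cos_arccos hq0 hq1.le] at this
      linarith
    have h₂ : Real.arccos q ≤ Real.arccos ζ := by
      by_contra hcon
      push_neg at hcon
      have := Real.cos_lt_cos_of_nonneg_of_le_pi (Real.arccos_nonneg ζ) (Real.arccos_le_pi q) hcon
      rw [Real.cos_arccos hq0 hq1.le, Real.cos_arccos (by linarith) hζ1.le] at this
      linarith
    linarith
  -- exponent bounds
  have hds : (0:ℝ) ≤ ζ / s := div_nonneg hζ0.le hs0.le
  have hd1 : ζ / s ≤ q / τ := div_le_div₀ (by linarith) h2 hτ0 hτs
  have hd2 : p / σ ≤ ζ / s := div_le_div₀ hζ0.le h1 hs0 hsσ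
  have e1 : Real.pi * (ζ / s) ≤ A := by
    have hπ2 : Real.pi ≤ 3.141593 := Real.pi_lt_d6.le
    have m1 : Real.pi * (ζ / s) ≤ 3.141593 * (q / τ) :=
      mul_le_mul hπ2 hd1 hds (by norm_num)
    have m2 : 3.141593 * (q / τ) ≤ A := by
      rw [mul_div_assoc'] at *
      rw [div_le_iff₀ hτ0]
      linarith
    linarith
  have e2 : B ≤ Real.arccos ζ * (ζ / s) := by
    have m1 : l * (p / σ) ≤ Real.arccos ζ * (ζ / s) :=
      mul_le_mul hβl hd2 (div_nonneg hp0.le hσ0.le) (Real.arccos_nonneg ζ)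
    have m2 : B ≤ l * (p / σ) := by
      rw [mul_div_assoc']
      rw [le_div_iff₀ hσ0]
      linarith
    linarith
  rcases le_or_gt (s - ζ) 0 with hneg | hpos
  · nlinarith [Real.exp_pos (-(Real.arccos ζ * (ζ / s))), Real.exp_pos (-(Real.pi * (ζ / s)))]
  · have hee : Real.exp (-(Real.arccos ζ * (ζ / s))) ≤ Real.exp (-B) :=
      Real.exp_le_exp.2 (by linarith)
    have c1 : Real.exp (-(Real.arccos ζ * (ζ / s))) * (s - ζ) ≤ Real.exp (-B) * (σ - p) :=
      mul_le_mul hee (by linarith) hpos.le (Real.exp_pos (-B)).le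
    have c2 : Real.exp (-B) * (σ - p) < Real.exp (-A) := by
      have hsplit : Real.exp (-B) = Real.exp (-A) * Real.exp (A - B) := by
        rw [← Real.exp_add]; ring_nf
      rw [hsplit, mul_assoc]
      have := mul_lt_mul_of_pos_left hE (Real.exp_pos (-A))
      linarith
    have c3 : Real.exp (-A) ≤ Real.exp (-(Real.pi * (ζ / s))) :=
      Real.exp_le_exp.2 (by linarith)
    linarith

theorem reduced_ineq (ζ : ℝ) (h1 : 0.613 ≤ ζ) (h2 : ζ < 1) :
    Real.exp (-(Real.arccos ζ * (ζ / Real.sqrt (1 - ζ^2)))) * (Real.sqrt (1 - ζ^2) - ζ)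
      < Real.exp (-(Real.pi * (ζ / Real.sqrt (1 - ζ^2)))) := by
  have h1' : (613/1000 : ℝ) ≤ ζ := by norm_num at h1 ⊢; linarith
  rcases le_or_gt (7072/10000 : ℝ) ζ with hbig | hsmall
  · -- trivial: sin ≤ cos
    have hζ0 : (0:ℝ) < ζ := by linarith
    have hsle : Real.sqrt (1 - ζ^2) ≤ ζ := by
      have h' : Real.sqrt (1 - ζ^2) ≤ Real.sqrt (ζ^2) := Real.sqrt_le_sqrt (by nlinarith)
      rwa [Real.sqrt_sq hζ0.le] at h'
    have hnp : Real.exp (-(Real.arccos ζ * (ζ / Real.sqrt (1 - ζ^2)))) * (Real.sqrt (1 - ζ^2) - ζ) ≤ 0 :=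
      mul_nonpos_of_nonneg_of_nonpos (Real.exp_pos _).le (by linarith)
    linarith [Real.exp_pos (-(Real.pi * (ζ / Real.sqrt (1 - ζ^2))))]
  · -- interval case analysis
    rcases le_or_gt ζ (30653/50000 : ℝ) with hc0 | hc0
    · exact key_step ζ (613/1000 : ℝ) (30653/50000 : ℝ) (790083/1000000 : ℝ) (7900363/10000000 : ℝ) (4554341/5000000 : ℝ) (24378437/10000000 : ℝ) (7067133/10000000 : ℝ)
          (by norm_num) (by norm_num) (by norm_num) (by norm_num)
          (by linarith) (by linarith) (by norm_num)
          (by norm_num) (by norm_num) (by norm_num) (by norm_num)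
          (by
            have hc := my_cos_lb (x := (4554341/5000000 : ℝ)) (by norm_num) (by norm_num)
            refine le_trans ?_ hc
            norm_num)
          (by norm_num) (by norm_num)
          (by
            have hx := my_exp_ub (x := (2163913/2500000 : ℝ)) (by norm_num) (by norm_num)
            have hx' : Real.exp (2163913/2500000 : ℝ) ≤ (2970436217/1250000000 : ℝ) := le_trans hx (by norm_num)
            have hsplit : (24378437/10000000 : ℝ) - (7067133/10000000 : ℝ) = (2163913/2500000 : ℝ) + (2163913/2500000 : ℝ) := by norm_num
            rw [hsplit, Real.exp_add]
            nlinarith [Real.exp_pos (2163913/2500000 : ℝ), hx'])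
    rcases le_or_gt ζ (12263/20000 : ℝ) with hc1 | hc1
    · exact key_step ζ (30653/50000 : ℝ) (12263/20000 : ℝ) (1975091/2500000 : ℝ) (1579933/2000000 : ℝ) (9107543/10000000 : ℝ) (24384171/10000000 : ℝ) (3533679/5000000 : ℝ)
          (by norm_num) (by norm_num) (by norm_num) (by norm_num)
          (by linarith) (by linarith) (by norm_num)
          (by norm_num) (by norm_num) (by norm_num) (by norm_num)
          (by
            have hc := my_cos_lb (x := (9107543/10000000 : ℝ)) (by norm_num) (by norm_num)
            refine le_trans ?_ hc
            norm_num)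
          (by norm_num) (by norm_num)
          (by
            have hx := my_exp_ub (x := (17316813/20000000 : ℝ)) (by norm_num) (by norm_num)
            have hx' : Real.exp (17316813/20000000 : ℝ) ≤ (23770036291/10000000000 : ℝ) := le_trans hx (by norm_num)
            have hsplit : (24384171/10000000 : ℝ) - (3533679/5000000 : ℝ) = (17316813/20000000 : ℝ) + (17316813/20000000 : ℝ) := by norm_num
            rw [hsplit, Real.exp_add]
            nlinarith [Real.exp_pos (17316813/20000000 : ℝ), hx'])
    rcases le_or_gt ζ (6133/10000 : ℝ) with hc2 | hc2
    · exact key_step ζ (12263/20000 : ℝ) (6133/10000 : ℝ) (3949833/5000000 : ℝ) (15797/20000 : ℝ) (2276411/2500000 : ℝ) (24393733/10000000 : ℝ) (3533773/5000000 : ℝ)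
          (by norm_num) (by norm_num) (by norm_num) (by norm_num)
          (by linarith) (by linarith) (by norm_num)
          (by norm_num) (by norm_num) (by norm_num) (by norm_num)
          (by
            have hc := my_cos_lb (x := (2276411/2500000 : ℝ)) (by norm_num) (by norm_num)
            refine le_trans ?_ hc
            norm_num)
          (by norm_num) (by norm_num)
          (by
            have hx := my_exp_ub (x := (17326187/20000000 : ℝ)) (by norm_num) (by norm_num)
            have hx' : Real.exp (17326187/20000000 : ℝ) ≤ (297264749/125000000 : ℝ) := le_trans hx (by norm_num)
            have hsplit : (24393733/10000000 : ℝ) - (3533773/5000000 : ℝ) = (17326187/20000000 : ℝ) + (17326187/20000000 : ℝ) := by norm_num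
            rw [hsplit, Real.exp_add]
            nlinarith [Real.exp_pos (17326187/20000000 : ℝ), hx'])
    rcases le_or_gt ζ (30677/50000 : ℝ) with hc3 | hc3
    · exact key_step ζ (6133/10000 : ℝ) (30677/50000 : ℝ) (7898501/10000000 : ℝ) (1974159/2500000 : ℝ) (1820521/2000000 : ℝ) (305113/125000 : ℝ) (3533979/5000000 : ℝ)
          (by norm_num) (by norm_num) (by norm_num) (by norm_num)
          (by linarith) (by linarith) (by norm_num)
          (by norm_num) (by norm_num) (by norm_num) (by norm_num)
          (by
            have hc := my_cos_lb (x := (1820521/2000000 : ℝ)) (by norm_num) (by norm_num)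
            refine le_trans ?_ hc
            norm_num)
          (by norm_num) (by norm_num)
          (by
            have hx := my_exp_ub (x := (8670541/10000000 : ℝ)) (by norm_num) (by norm_num)
            have hx' : Real.exp (8670541/10000000 : ℝ) ≤ (1487431097/625000000 : ℝ) := le_trans hx (by norm_num)
            have hsplit : (305113/125000 : ℝ) - (3533979/5000000 : ℝ) = (8670541/10000000 : ℝ) + (8670541/10000000 : ℝ) := by norm_num
            rw [hsplit, Real.exp_add]
            nlinarith [Real.exp_pos (8670541/10000000 : ℝ), hx'])
    rcases le_or_gt ζ (3837/6250 : ℝ) with hc4 | hc4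
    · exact key_step ζ (30677/50000 : ℝ) (3837/6250 : ℝ) (7896637/10000000 : ℝ) (3946841/5000000 : ℝ) (142153/156250 : ℝ) (12216649/5000000 : ℝ) (7068653/10000000 : ℝ)
          (by norm_num) (by norm_num) (by norm_num) (by norm_num)
          (by linarith) (by linarith) (by norm_num)
          (by norm_num) (by norm_num) (by norm_num) (by norm_num)
          (by
            have hc := my_cos_lb (x := (142153/156250 : ℝ)) (by norm_num) (by norm_num)
            refine le_trans ?_ hc
            norm_num)
          (by norm_num) (by norm_num)
          (by
            have hx := my_exp_ub (x := (3472929/4000000 : ℝ)) (by norm_num) (by norm_num)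
            have hx' : Real.exp (3472929/4000000 : ℝ) ≤ (23826952749/10000000000 : ℝ) := le_trans hx (by norm_num)
            have hsplit : (12216649/5000000 : ℝ) - (7068653/10000000 : ℝ) = (3472929/4000000 : ℝ) + (3472929/4000000 : ℝ) := by norm_num
            rw [hsplit, Real.exp_add]
            nlinarith [Real.exp_pos (3472929/4000000 : ℝ), hx'])
    rcases le_or_gt ζ (12291/20000 : ℝ) with hc5 | hc5
    · exact key_step ζ (3837/6250 : ℝ) (12291/20000 : ℝ) (7893683/10000000 : ℝ) (3944389/5000000 : ℝ) (9089809/10000000 : ℝ) (978943/400000 : ℝ) (706947/1000000 : ℝ)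
          (by norm_num) (by norm_num) (by norm_num) (by norm_num)
          (by linarith) (by linarith) (by norm_num)
          (by norm_num) (by norm_num) (by norm_num) (by norm_num)
          (by
            have hc := my_cos_lb (x := (9089809/10000000 : ℝ)) (by norm_num) (by norm_num)
            refine le_trans ?_ hc
            norm_num)
          (by norm_num) (by norm_num)
          (by
            have hx := my_exp_ub (x := (3480821/4000000 : ℝ)) (by norm_num) (by norm_num)
            have hx' : Real.exp (3480821/4000000 : ℝ) ≤ (23874009737/10000000000 : ℝ) := le_trans hx (by norm_num)
            have hsplit : (978943/400000 : ℝ) - (706947/1000000 : ℝ) = (3480821/4000000 : ℝ) + (3480821/4000000 : ℝ) := by norm_num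
            rw [hsplit, Real.exp_add]
            nlinarith [Real.exp_pos (3480821/4000000 : ℝ), hx'])
    rcases le_or_gt ζ (61557/100000 : ℝ) with hc6 | hc6
    · exact key_step ζ (12291/20000 : ℝ) (61557/100000 : ℝ) (7888779/10000000 : ℝ) (3940411/5000000 : ℝ) (1134609/1250000 : ℝ) (24538943/10000000 : ℝ) (1414209/2000000 : ℝ)
          (by norm_num) (by norm_num) (by norm_num) (by norm_num)
          (by linarith) (by linarith) (by norm_num)
          (by norm_num) (by norm_num) (by norm_num) (by norm_num)
          (by
            have hc := my_cos_lb (x := (1134609/1250000 : ℝ)) (by norm_num) (by norm_num)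
            refine le_trans ?_ hc
            norm_num)
          (by norm_num) (by norm_num)
          (by
            have hx := my_exp_ub (x := (8733949/10000000 : ℝ)) (by norm_num) (by norm_num)
            have hx' : Real.exp (8733949/10000000 : ℝ) ≤ (23950281053/10000000000 : ℝ) := le_trans hx (by norm_num)
            have hsplit : (24538943/10000000 : ℝ) - (1414209/2000000 : ℝ) = (8733949/10000000 : ℝ) + (8733949/10000000 : ℝ) := by norm_num
            rw [hsplit, Real.exp_add]
            nlinarith [Real.exp_pos (8733949/10000000 : ℝ), hx'])
    rcases le_or_gt ζ (61723/100000 : ℝ) with hc7 | hc7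
    · exact key_step ζ (61557/100000 : ℝ) (61723/100000 : ℝ) (7880823/10000000 : ℝ) (7867827/10000000 : ℝ) (9055791/10000000 : ℝ) (24645757/10000000 : ℝ) (1414693/2000000 : ℝ)
          (by norm_num) (by norm_num) (by norm_num) (by norm_num)
          (by linarith) (by linarith) (by norm_num)
          (by norm_num) (by norm_num) (by norm_num) (by norm_num)
          (by
            have hc := my_cos_lb (x := (9055791/10000000 : ℝ)) (by norm_num) (by norm_num)
            refine le_trans ?_ hc
            norm_num)
          (by norm_num) (by norm_num)
          (by
            have hx := my_exp_ub (x := (4393073/5000000 : ℝ)) (by norm_num) (by norm_num)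
            have hx' : Real.exp (4393073/5000000 : ℝ) ≤ (24075621177/10000000000 : ℝ) := le_trans hx (by norm_num)
            have hsplit : (24645757/10000000 : ℝ) - (1414693/2000000 : ℝ) = (4393073/5000000 : ℝ) + (4393073/5000000 : ℝ) := by norm_num
            rw [hsplit, Real.exp_add]
            nlinarith [Real.exp_pos (4393073/5000000 : ℝ), hx'])
    rcases le_or_gt ζ (61863/100000 : ℝ) with hc8 | hc8
    · exact key_step ζ (61723/100000 : ℝ) (61863/100000 : ℝ) (1966957/2500000 : ℝ) (982103/1250000 : ℝ) (1807597/2000000 : ℝ) (24736251/10000000 : ℝ) (3545143/5000000 : ℝ)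
          (by norm_num) (by norm_num) (by norm_num) (by norm_num)
          (by linarith) (by linarith) (by norm_num)
          (by norm_num) (by norm_num) (by norm_num) (by norm_num)
          (by
            have hc := my_cos_lb (x := (1807597/2000000 : ℝ)) (by norm_num) (by norm_num)
            refine le_trans ?_ hc
            norm_num)
          (by norm_num) (by norm_num)
          (by
            have hx := my_exp_ub (x := (3529193/4000000 : ℝ)) (by norm_num) (by norm_num)
            have hx' : Real.exp (3529193/4000000 : ℝ) ≤ (24164470887/10000000000 : ℝ) := le_trans hx (by norm_num)
            have hsplit : (24736251/10000000 : ℝ) - (3545143/5000000 : ℝ) = (3529193/4000000 : ℝ) + (3529193/4000000 : ℝ) := by norm_num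
            rw [hsplit, Real.exp_add]
            nlinarith [Real.exp_pos (3529193/4000000 : ℝ), hx'])
    rcases le_or_gt ζ (15557/25000 : ℝ) with hc9 | hc9
    · exact key_step ζ (61863/100000 : ℝ) (15557/25000 : ℝ) (314273/400000 : ℝ) (7827947/10000000 : ℝ) (8991443/10000000 : ℝ) (6243497/2500000 : ℝ) (3539837/5000000 : ℝ)
          (by norm_num) (by norm_num) (by norm_num) (by norm_num)
          (by linarith) (by linarith) (by norm_num)
          (by norm_num) (by norm_num) (by norm_num) (by norm_num)
          (by
            have hc := my_cos_lb (x := (8991443/10000000 : ℝ)) (by norm_num) (by norm_num)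
            refine le_trans ?_ hc
            norm_num)
          (by norm_num) (by norm_num)
          (by
            have hx := my_exp_ub (x := (8947157/10000000 : ℝ)) (by norm_num) (by norm_num)
            have hx' : Real.exp (8947157/10000000 : ℝ) ≤ (24466402729/10000000000 : ℝ) := le_trans hx (by norm_num)
            have hsplit : (6243497/2500000 : ℝ) - (3539837/5000000 : ℝ) = (8947157/10000000 : ℝ) + (8947157/10000000 : ℝ) := by norm_num
            rw [hsplit, Real.exp_add]
            nlinarith [Real.exp_pos (8947157/10000000 : ℝ), hx'])
    rcases le_or_gt ζ (1571/2500 : ℝ) with hc10 | hc10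
    · exact key_step ζ (15557/25000 : ℝ) (1571/2500 : ℝ) (1956987/2500000 : ℝ) (7778903/10000000 : ℝ) (1114127/1250000 : ℝ) (5075721/2000000 : ℝ) (7085371/10000000 : ℝ)
          (by norm_num) (by norm_num) (by norm_num) (by norm_num)
          (by linarith) (by linarith) (by norm_num)
          (by norm_num) (by norm_num) (by norm_num) (by norm_num)
          (by
            have hc := my_cos_lb (x := (1114127/1250000 : ℝ)) (by norm_num) (by norm_num)
            refine le_trans ?_ hc
            norm_num)
          (by norm_num) (by norm_num)
          (by
            have hx := my_exp_ub (x := (9146617/10000000 : ℝ)) (by norm_num) (by norm_num)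
            have hx' : Real.exp (9146617/10000000 : ℝ) ≤ (12479654483/5000000000 : ℝ) := le_trans hx (by norm_num)
            have hsplit : (5075721/2000000 : ℝ) - (7085371/10000000 : ℝ) = (9146617/10000000 : ℝ) + (9146617/10000000 : ℝ) := by norm_num
            rw [hsplit, Real.exp_add]
            nlinarith [Real.exp_pos (9146617/10000000 : ℝ), hx'])
    rcases le_or_gt ζ (6389/10000 : ℝ) with hc11 | hc11
    · exact key_step ζ (1571/2500 : ℝ) (6389/10000 : ℝ) (972363/1250000 : ℝ) (7692897/10000000 : ℝ) (8777287/10000000 : ℝ) (26091131/10000000 : ℝ) (7090519/10000000 : ℝ)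
          (by norm_num) (by norm_num) (by norm_num) (by norm_num)
          (by linarith) (by linarith) (by norm_num)
          (by norm_num) (by norm_num) (by norm_num) (by norm_num)
          (by
            have hc := my_cos_lb (x := (8777287/10000000 : ℝ)) (by norm_num) (by norm_num)
            refine le_trans ?_ hc
            norm_num)
          (by norm_num) (by norm_num)
          (by
            have hx := my_exp_ub (x := (4750153/5000000 : ℝ)) (by norm_num) (by norm_num)
            have hx' : Real.exp (4750153/5000000 : ℝ) ≤ (25857889227/10000000000 : ℝ) := le_trans hx (by norm_num)
            have hsplit : (26091131/10000000 : ℝ) - (7090519/10000000 : ℝ) = (4750153/5000000 : ℝ) + (4750153/5000000 : ℝ) := by norm_num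
            rw [hsplit, Real.exp_add]
            nlinarith [Real.exp_pos (4750153/5000000 : ℝ), hx'])
    rcases le_or_gt ζ (65801/100000 : ℝ) with hc12 | hc12
    · exact key_step ζ (6389/10000 : ℝ) (65801/100000 : ℝ) (3846449/5000000 : ℝ) (7530091/10000000 : ℝ) (8526233/10000000 : ℝ) (27452519/10000000 : ℝ) (7081089/10000000 : ℝ)
          (by norm_num) (by norm_num) (by norm_num) (by norm_num)
          (by linarith) (by linarith) (by norm_num)
          (by norm_num) (by norm_num) (by norm_num) (by norm_num)
          (by
            have hc := my_cos_lb (x := (8526233/10000000 : ℝ)) (by norm_num) (by norm_num)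
            refine le_trans ?_ hc
            norm_num)
          (by norm_num) (by norm_num)
          (by
            have hx := my_exp_ub (x := (2037143/3000000 : ℝ)) (by norm_num) (by norm_num)
            have hx' : Real.exp (2037143/3000000 : ℝ) ≤ (1971998887/1000000000 : ℝ) := le_trans hx (by norm_num)
            have hsplit : (27452519/10000000 : ℝ) - (7081089/10000000 : ℝ) = (2037143/3000000 : ℝ) + (2037143/3000000 : ℝ) + (2037143/3000000 : ℝ) := by norm_num
            rw [hsplit, Real.exp_add, Real.exp_add]
            have hsq : Real.exp (2037143/3000000 : ℝ) * Real.exp (2037143/3000000 : ℝ) ≤ (1971998887/1000000000 : ℝ) * (1971998887/1000000000 : ℝ) := by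
              nlinarith [Real.exp_pos (2037143/3000000 : ℝ), hx']
            nlinarith [Real.exp_pos (2037143/3000000 : ℝ), hx', hsq, Real.exp_pos ((2037143/3000000 : ℝ) + (2037143/3000000 : ℝ))])
    rcases le_or_gt ζ (69687/100000 : ℝ) with hc13 | hc13
    · exact key_step ζ (65801/100000 : ℝ) (69687/100000 : ℝ) (1882523/2500000 : ℝ) (3585987/5000000 : ℝ) (7997723/10000000 : ℝ) (15262757/5000000 : ℝ) (3494367/5000000 : ℝ)
          (by norm_num) (by norm_num) (by norm_num) (by norm_num)
          (by linarith) (by linarith) (by norm_num)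
          (by norm_num) (by norm_num) (by norm_num) (by norm_num)
          (by
            have hc := my_cos_lb (x := (7997723/10000000 : ℝ)) (by norm_num) (by norm_num)
            refine le_trans ?_ hc
            norm_num)
          (by norm_num) (by norm_num)
          (by
            have hx := my_exp_ub (x := (1176839/1500000 : ℝ)) (by norm_num) (by norm_num)
            have hx' : Real.exp (1176839/1500000 : ℝ) ≤ (10957205707/5000000000 : ℝ) := le_trans hx (by norm_num)
            have hsplit : (15262757/5000000 : ℝ) - (3494367/5000000 : ℝ) = (1176839/1500000 : ℝ) + (1176839/1500000 : ℝ) + (1176839/1500000 : ℝ) := by norm_num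
            rw [hsplit, Real.exp_add, Real.exp_add]
            have hsq : Real.exp (1176839/1500000 : ℝ) * Real.exp (1176839/1500000 : ℝ) ≤ (10957205707/5000000000 : ℝ) * (10957205707/5000000000 : ℝ) := by
              nlinarith [Real.exp_pos (1176839/1500000 : ℝ), hx']
            nlinarith [Real.exp_pos (1176839/1500000 : ℝ), hx', hsq, Real.exp_pos ((1176839/1500000 : ℝ) + (1176839/1500000 : ℝ))])
    exact key_step ζ (69687/100000 : ℝ) (442/625 : ℝ) (286879/400000 : ℝ) (1414027/2000000 : ℝ) (7852663/10000000 : ℝ) (15712109/5000000 : ℝ) (1526019/2000000 : ℝ)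
        (by norm_num) (by norm_num) (by norm_num) (by norm_num)
        (by linarith) (by linarith) (by norm_num)
        (by norm_num) (by norm_num) (by norm_num) (by norm_num)
        (by
          have hc := my_cos_lb (x := (7852663/10000000 : ℝ)) (by norm_num) (by norm_num)
          refine le_trans ?_ hc
          norm_num)
        (by norm_num) (by norm_num)
        (by
          have hx := my_exp_ub (x := (23794123/30000000 : ℝ)) (by norm_num) (by norm_num)
          have hx' : Real.exp (23794123/30000000 : ℝ) ≤ (2762900507/1250000000 : ℝ) := le_trans hx (by norm_num)
          have hsplit : (15712109/5000000 : ℝ) - (1526019/2000000 : ℝ) = (23794123/30000000 : ℝ) + (23794123/30000000 : ℝ) + (23794123/30000000 : ℝ) := by norm_num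
          rw [hsplit, Real.exp_add, Real.exp_add]
          have hsq : Real.exp (23794123/30000000 : ℝ) * Real.exp (23794123/30000000 : ℝ) ≤ (2762900507/1250000000 : ℝ) * (2762900507/1250000000 : ℝ) := by
            nlinarith [Real.exp_pos (23794123/30000000 : ℝ), hx']
          nlinarith [Real.exp_pos (23794123/30000000 : ℝ), hx', hsq, Real.exp_pos ((23794123/30000000 : ℝ) + (23794123/30000000 : ℝ))])

/-- For damping ratio `0.613 ≤ ζ < 1`, the ellipse approximating the cardioid is
horizontally oriented: `a(ζ) > b(ζ)`, where, with `β = arccos ζ`,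
`a(ζ) = e^{-β/tan β} cos β + e^{-π/tan β}` and `b(ζ) = e^{-β/tan β} sin β`. -/
theorem ellipse_horizontal_of_large_damping (ζ : ℝ) (h1 : 0.613 ≤ ζ) (h2 : ζ < 1) :
    Real.exp (-(Real.arccos ζ) / Real.tan (Real.arccos ζ)) * Real.cos (Real.arccos ζ)
      + Real.exp (-Real.pi / Real.tan (Real.arccos ζ))
    > Real.exp (-(Real.arccos ζ) / Real.tan (Real.arccos ζ)) * Real.sin (Real.arccos ζ) := by
  have hζ0 : (0:ℝ) < ζ := by norm_num at h1 ⊢; linarith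
  have hs0 : 0 < Real.sqrt (1 - ζ^2) := Real.sqrt_pos.2 (by nlinarith)
  have hdiv : ∀ y : ℝ, -y / (Real.sqrt (1 - ζ^2) / ζ) = -(y * (ζ / Real.sqrt (1 - ζ^2))) := by
    intro y
    field_simp
  have hsq : (1 : ℝ) - ζ^2 = 1 - ζ^2 := rfl
  rw [Real.tan_arccos, Real.cos_arccos (by linarith) h2.le, Real.sin_arccos]
  have key := reduced_ineq ζ h1 h2
  rw [show (1 : ℝ) - ζ^2 = 1 - ζ^2 from rfl] at *
  rw [hdiv (Real.arccos ζ), hdiv Real.pi]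
  nlinarith [key]
end

section
/- There exists a critical damping ratio ζ* with 0.61 < ζ* < 0.615 at which the approximating ellipse degenerates into a circle, i.e., a(ζ*) = b(ζ*), where a(ζ) = e^{−β/tan β} cos β + e^{−π/tan β}, b(ζ) = e^{−β/tan β} sin β and β = arccos ζ. -/
open Real

private lemma cos_base {x : ℝ} (h0 : 0 ≤ x) (h1 : x ≤ 1) :
    1 - x^2/2 - x^4*(5/96) ≤ Real.cos x ∧ Real.cos x ≤ 1 - x^2/2 + x^4*(5/96) := by
  have hb := Real.cos_bound (x := x) (by rwa [abs_of_nonneg h0])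
  rw [abs_of_nonneg h0] at hb
  have := abs_le.1 hb
  constructor <;> nlinarith [this.1, this.2]

private lemma cos_step {x lo hi : ℝ} (h0 : 0 ≤ lo) (hlo : lo ≤ Real.cos x)
    (hhi : Real.cos x ≤ hi) :
    2*lo^2 - 1 ≤ Real.cos (2*x) ∧ Real.cos (2*x) ≤ 2*hi^2 - 1 := by
  rw [Real.cos_two_mul]
  constructor <;> nlinarith

private lemma cos_916_lt : Real.cos 0.916 < 0.61 := by
  have b := cos_base (x := 0.1145) (by norm_num) (by norm_num)
  have b0 : (0.99343:ℝ) ≤ Real.cos 0.1145 ∧ Real.cos 0.1145 ≤ 0.99346 :=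
    ⟨by nlinarith [b.1], by nlinarith [b.2]⟩
  have s1 := cos_step (lo := 0.99343) (hi := 0.99346) (by norm_num) b0.1 b0.2
  rw [show (2:ℝ)*0.1145 = 0.229 by norm_num] at s1
  have b1 : (0.97380:ℝ) ≤ Real.cos 0.229 ∧ Real.cos 0.229 ≤ 0.97393 :=
    ⟨by nlinarith [s1.1], by nlinarith [s1.2]⟩
  have s2 := cos_step (lo := 0.97380) (hi := 0.97393) (by norm_num) b1.1 b1.2
  rw [show (2:ℝ)*0.229 = 0.458 by norm_num] at s2
  have b2 : (0.89657:ℝ) ≤ Real.cos 0.458 ∧ Real.cos 0.458 ≤ 0.89708 :=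
    ⟨by nlinarith [s2.1], by nlinarith [s2.2]⟩
  have s3 := cos_step (lo := 0.89657) (hi := 0.89708) (by norm_num) b2.1 b2.2
  rw [show (2:ℝ)*0.458 = 0.916 by norm_num] at s3
  nlinarith [s3.2]

private lemma cos_9064_gt : (0.615:ℝ) < Real.cos 0.9064 := by
  have b := cos_base (x := 0.1133) (by norm_num) (by norm_num)
  have b0 : (0.99357:ℝ) ≤ Real.cos 0.1133 ∧ Real.cos 0.1133 ≤ 0.99360 :=
    ⟨by nlinarith [b.1], by nlinarith [b.2]⟩
  have s1 := cos_step (lo := 0.99357) (hi := 0.99360) (by norm_num) b0.1 b0.2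
  rw [show (2:ℝ)*0.1133 = 0.2266 by norm_num] at s1
  have b1 : (0.97436:ℝ) ≤ Real.cos 0.2266 ∧ Real.cos 0.2266 ≤ 0.97449 :=
    ⟨by nlinarith [s1.1], by nlinarith [s1.2]⟩
  have s2 := cos_step (lo := 0.97436) (hi := 0.97449) (by norm_num) b1.1 b1.2
  rw [show (2:ℝ)*0.2266 = 0.4532 by norm_num] at s2
  have b2 : (0.89875:ℝ) ≤ Real.cos 0.4532 ∧ Real.cos 0.4532 ≤ 0.89927 :=
    ⟨by nlinarith [s2.1], by nlinarith [s2.2]⟩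
  have s3 := cos_step (lo := 0.89875) (hi := 0.89927) (by norm_num) b2.1 b2.2
  rw [show (2:ℝ)*0.4532 = 0.9064 by norm_num] at s3
  nlinarith [s3.1]

private lemma exp_1713_gt : (5.4825:ℝ) < Real.exp 1.713 := by
  have h1 : Real.exp 1.713 = Real.exp 1 * Real.exp 0.713 := by
    rw [← Real.exp_add]; norm_num
  have h2 := Real.exp_one_gt_d9
  have hb := Real.exp_bound (x := (0.713:ℝ)) (by rw [abs_of_pos] <;> norm_num) (n := 6) (by norm_num)
  rw [show |(0.713:ℝ)| = 0.713 from abs_of_pos (by norm_num)] at hb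
  have hb' := (abs_le.1 hb).1
  have hS : Real.exp 0.713 ≥ 2.0396 := by
    norm_num [Finset.sum_range_succ, Nat.factorial] at hb'
    linarith [hb']
  rw [h1]
  nlinarith [Real.exp_pos (1:ℝ), Real.exp_pos (0.713:ℝ)]

private lemma exp_17434_lt : Real.exp 1.7434 < 5.7603 := by
  have h1 : Real.exp 1.7434 = Real.exp 1 * Real.exp 0.7434 := by
    rw [← Real.exp_add]; norm_num
  have h2 := Real.exp_one_lt_d9
  have hb := Real.exp_bound (x := (0.7434:ℝ)) (by rw [abs_of_pos] <;> norm_num) (n := 6) (by norm_num)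
  rw [show |(0.7434:ℝ)| = 0.7434 from abs_of_pos (by norm_num)] at hb
  have hb' := (abs_le.1 hb).2
  have hS : Real.exp 0.7434 ≤ 2.1031 := by
    norm_num [Finset.sum_range_succ, Nat.factorial] at hb'
    linarith [hb']
  rw [h1]
  nlinarith [Real.exp_pos (1:ℝ), Real.exp_pos (0.7434:ℝ)]

private lemma F_eq (ζ : ℝ) (h0 : 0 < ζ) (h1 : ζ < 1) :
    Real.exp (-(Real.arccos ζ) / Real.tan (Real.arccos ζ)) * Real.cos (Real.arccos ζ)
      + Real.exp (-Real.pi / Real.tan (Real.arccos ζ))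
      - Real.exp (-(Real.arccos ζ) / Real.tan (Real.arccos ζ)) * Real.sin (Real.arccos ζ)
    = Real.exp (-(Real.arccos ζ * ζ) / Real.sqrt (1 - ζ^2)) * (ζ - Real.sqrt (1 - ζ^2))
      + Real.exp (-(Real.pi * ζ) / Real.sqrt (1 - ζ^2)) := by
  rw [Real.tan_arccos, Real.cos_arccos (by linarith) (by linarith), Real.sin_arccos]
  rw [div_div_eq_mul_div, div_div_eq_mul_div]
  rw [show -(Real.arccos ζ) * ζ = -(Real.arccos ζ * ζ) by ring,
    show -Real.pi * ζ = -(Real.pi * ζ) by ring]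
  ring

private lemma endpoint1 :
    Real.exp (-(Real.arccos 0.61 * 0.61) / Real.sqrt (1 - (0.61:ℝ)^2))
        * ((0.61:ℝ) - Real.sqrt (1 - (0.61:ℝ)^2))
      + Real.exp (-(Real.pi * 0.61) / Real.sqrt (1 - (0.61:ℝ)^2)) < 0 := by
  set s := Real.sqrt (1 - (0.61:ℝ)^2) with hs_def
  set A := Real.arccos 0.61 with hA_def
  have hs_lo : (0.7924:ℝ) < s := (Real.lt_sqrt (by norm_num)).2 (by norm_num)
  have hs_hi : s < 0.7925 := (Real.sqrt_lt' (by norm_num)).2 (by norm_num)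
  have hs_pos : (0:ℝ) < s := by linarith
  have hA_mem : A ∈ Set.Icc 0 Real.pi := ⟨Real.arccos_nonneg _, Real.arccos_le_pi _⟩
  have hu_mem : (0.916:ℝ) ∈ Set.Icc 0 Real.pi :=
    ⟨by norm_num, by linarith [Real.pi_gt_d6]⟩
  have hA_hi : A < 0.916 := by
    have h := Real.strictAntiOn_cos.lt_iff_gt hu_mem hA_mem
    refine h.1 ?_
    rw [hA_def, Real.cos_arccos (by norm_num) (by norm_num)]
    exact cos_916_lt
  have hπ := Real.pi_gt_d6
  have harg : -(Real.pi * 0.61) / s - (-(A * 0.61) / s) ≤ -1.713 := by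
    rw [div_sub_div_same, div_le_iff₀ hs_pos]
    nlinarith
  have key : Real.exp (-(Real.pi * 0.61) / s) < Real.exp (-(A * 0.61) / s) * (s - 0.61) := by
    have h1 : Real.exp (-(Real.pi * 0.61) / s)
        = Real.exp (-(A * 0.61) / s)
          * Real.exp (-(Real.pi * 0.61) / s - (-(A * 0.61) / s)) := by
      rw [← Real.exp_add]; ring_nf
    rw [h1]
    have h2 : Real.exp (-(Real.pi * 0.61) / s - (-(A * 0.61) / s)) < s - 0.61 := by
      calc Real.exp (-(Real.pi * 0.61) / s - (-(A * 0.61) / s))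
          ≤ Real.exp (-1.713) := Real.exp_le_exp.2 harg
        _ < 0.1824 := by
            rw [Real.exp_neg]
            have h5 := exp_1713_gt
            have hpos := Real.exp_pos (1.713:ℝ)
            rw [inv_lt_iff_one_lt_mul₀ hpos]
            nlinarith
        _ < s - 0.61 := by linarith
    exact mul_lt_mul_of_pos_left h2 (Real.exp_pos _)
  nlinarith [key]

private lemma endpoint2 :
    0 < Real.exp (-(Real.arccos 0.615 * 0.615) / Real.sqrt (1 - (0.615:ℝ)^2))
        * ((0.615:ℝ) - Real.sqrt (1 - (0.615:ℝ)^2))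
      + Real.exp (-(Real.pi * 0.615) / Real.sqrt (1 - (0.615:ℝ)^2)) := by
  set s := Real.sqrt (1 - (0.615:ℝ)^2) with hs_def
  set A := Real.arccos 0.615 with hA_def
  have hs_lo : (0.7885:ℝ) < s := (Real.lt_sqrt (by norm_num)).2 (by norm_num)
  have hs_hi : s < 0.7886 := (Real.sqrt_lt' (by norm_num)).2 (by norm_num)
  have hs_pos : (0:ℝ) < s := by linarith
  have hA_mem : A ∈ Set.Icc 0 Real.pi := ⟨Real.arccos_nonneg _, Real.arccos_le_pi _⟩
  have hu_mem : (0.9064:ℝ) ∈ Set.Icc 0 Real.pi :=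
    ⟨by norm_num, by linarith [Real.pi_gt_d6]⟩
  have hA_lo : (0.9064:ℝ) < A := by
    have h := Real.strictAntiOn_cos.lt_iff_gt hA_mem hu_mem
    refine h.1 ?_
    rw [hA_def, Real.cos_arccos (by norm_num) (by norm_num)]
    exact cos_9064_gt
  have hπ := Real.pi_lt_d6
  have harg : (-1.7434:ℝ) ≤ -(Real.pi * 0.615) / s - (-(A * 0.615) / s) := by
    rw [div_sub_div_same, le_div_iff₀ hs_pos]
    nlinarith
  have key : Real.exp (-(A * 0.615) / s) * (s - 0.615) < Real.exp (-(Real.pi * 0.615) / s) := by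
    have h1 : Real.exp (-(Real.pi * 0.615) / s)
        = Real.exp (-(A * 0.615) / s)
          * Real.exp (-(Real.pi * 0.615) / s - (-(A * 0.615) / s)) := by
      rw [← Real.exp_add]; ring_nf
    rw [h1]
    have h2 : s - 0.615 < Real.exp (-(Real.pi * 0.615) / s - (-(A * 0.615) / s)) := by
      calc s - 0.615 < 0.1736 := by linarith
        _ < Real.exp (-1.7434) := by
            rw [Real.exp_neg]
            have h5 := exp_17434_lt
            have hpos := Real.exp_pos (1.7434:ℝ)
            rw [inv_eq_one_div, lt_div_iff₀ hpos]
            nlinarith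
        _ ≤ Real.exp (-(Real.pi * 0.615) / s - (-(A * 0.615) / s)) := Real.exp_le_exp.2 harg
    exact mul_lt_mul_of_pos_left h2 (Real.exp_pos _)
  nlinarith [key]

/-- There is a critical damping ratio `ζ*` with `0.61 < ζ* < 0.615` at which the
approximating ellipse degenerates into a circle, i.e. `a(ζ*) = b(ζ*)`, where,
with `β = arccos ζ`, `a(ζ) = e^{-β/tan β} cos β + e^{-π/tan β}` and
`b(ζ) = e^{-β/tan β} sin β`. -/
theorem exists_critical_damping_ratio :
    ∃ ζ : ℝ, 0.61 < ζ ∧ ζ < 0.615 ∧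
      Real.exp (-(Real.arccos ζ) / Real.tan (Real.arccos ζ)) * Real.cos (Real.arccos ζ)
        + Real.exp (-Real.pi / Real.tan (Real.arccos ζ))
      = Real.exp (-(Real.arccos ζ) / Real.tan (Real.arccos ζ)) * Real.sin (Real.arccos ζ) := by
  set F : ℝ → ℝ := fun ζ =>
    Real.exp (-(Real.arccos ζ) / Real.tan (Real.arccos ζ)) * Real.cos (Real.arccos ζ)
      + Real.exp (-Real.pi / Real.tan (Real.arccos ζ))
      - Real.exp (-(Real.arccos ζ) / Real.tan (Real.arccos ζ)) * Real.sin (Real.arccos ζ)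
    with hF_def
  have hcont : ContinuousOn F (Set.Icc 0.61 0.615) := by
    intro ζ hζ
    have h0 : (0:ℝ) < ζ := by have := hζ.1; norm_num at this ⊢; linarith
    have h1 : ζ < 1 := by have := hζ.2; norm_num at this ⊢; linarith
    have hac : ContinuousAt Real.arccos ζ := Real.continuous_arccos.continuousAt
    have hcos : Real.cos (Real.arccos ζ) = ζ :=
      Real.cos_arccos (by linarith) (by linarith)
    have htan_at : ContinuousAt Real.tan (Real.arccos ζ) :=
      Real.continuousAt_tan.2 (by rw [hcos]; exact ne_of_gt h0)
    have hT : ContinuousAt (fun x => Real.tan (Real.arccos x)) ζ := htan_at.comp hac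
    have htanz : Real.tan (Real.arccos ζ) ≠ 0 := by
      rw [Real.tan_arccos]
      have hsp : (0:ℝ) < Real.sqrt (1 - ζ^2) := Real.sqrt_pos.2 (by nlinarith)
      exact div_ne_zero (ne_of_gt hsp) (ne_of_gt h0)
    apply ContinuousAt.continuousWithinAt
    apply ContinuousAt.sub
    · apply ContinuousAt.add
      · exact ((Real.continuous_exp.continuousAt).comp ((hac.neg).div hT htanz)).mul
          ((Real.continuous_cos.continuousAt).comp hac)
      · exact (Real.continuous_exp.continuousAt).comp (continuousAt_const.div hT htanz)
    · exact ((Real.continuous_exp.continuousAt).comp ((hac.neg).div hT htanz)).mul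
        ((Real.continuous_sin.continuousAt).comp hac)
  have hF1 : F 0.61 < 0 := by
    rw [hF_def]
    simp only
    rw [F_eq 0.61 (by norm_num) (by norm_num)]
    exact endpoint1
  have hF2 : 0 < F 0.615 := by
    rw [hF_def]
    simp only
    rw [F_eq 0.615 (by norm_num) (by norm_num)]
    exact endpoint2
  have hIVT := intermediate_value_Ioo (by norm_num : (0.61:ℝ) ≤ 0.615) hcont
  obtain ⟨ζ, hmem, hζ⟩ := hIVT ⟨hF1, hF2⟩
  refine ⟨ζ, hmem.1, hmem.2, ?_⟩
  have : F ζ = 0 := hζ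
  rw [hF_def] at this
  simp only at this
  linarith
end

section
/- For every damping ratio ζ with 0 < ζ ≤ 0.6, the ellipse approximating the cardioid is vertically oriented: its imaginary semi-axis exceeds its real semi-axis, i.e., a(ζ) < b(ζ), where a(ζ) = e^{−β/tan β} cos β + e^{−π/tan β}, b(ζ) = e^{−β/tan β} sin β and β = arccos ζ. -/
open Real

private lemma exp_lb8 {q : ℝ} (hq : 0 ≤ q) :
    1 + q + q^2/2 + q^3/6 + q^4/24 + q^5/120 + q^6/720 + q^7/5040 + q^8/40320 ≤ Real.exp q := by
  have h := Real.sum_le_exp_of_nonneg hq 9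
  norm_num [Finset.sum_range_succ, Nat.factorial] at h
  linarith

private lemma step (ζ s a b σ ρ q : ℝ) (hs2 : s^2 = 1 - ζ^2) (hspos : 0 < s)
    (ha : a ≤ ζ) (hb : ζ ≤ b) (h0a : 0 < a)
    (hσ2 : 1 - a^2 ≤ σ^2) (hσ : 0 < σ) (hρ2 : ρ^2 ≤ 1 - b^2) (hρ : 0 ≤ ρ)
    (hq : q * σ ≤ (1.5707 + a) * a) (hq0 : 0 ≤ q)
    (hP : 1 < (1 + q + q^2/2 + q^3/6 + q^4/24 + q^5/120 + q^6/720 + q^7/5040 + q^8/40320) * (ρ - b)) :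
    Real.exp (-((π/2 + ζ) * ζ / s)) < s - ζ := by
  have hpi : (3.141592 : ℝ) < π := Real.pi_gt_d6
  have hsσ : s ≤ σ := by nlinarith [sq_nonneg (s - σ)]
  have hρs : ρ ≤ s := by nlinarith [sq_nonneg (s - ρ)]
  have hx : q ≤ (π/2 + ζ) * ζ / s := by
    rw [le_div_iff₀ hspos]
    calc q * s ≤ q * σ := by nlinarith
      _ ≤ (1.5707 + a) * a := hq
      _ ≤ (π/2 + ζ) * ζ := by nlinarith
  have hP0 : (0:ℝ) < 1 + q + q^2/2 + q^3/6 + q^4/24 + q^5/120 + q^6/720 + q^7/5040 + q^8/40320 := by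
    positivity
  have h1 : Real.exp (-((π/2 + ζ) * ζ / s)) ≤ Real.exp (-q) := by
    apply Real.exp_le_exp.mpr; linarith
  have h2 : Real.exp (-q) ≤ (1 + q + q^2/2 + q^3/6 + q^4/24 + q^5/120 + q^6/720 + q^7/5040 + q^8/40320)⁻¹ := by
    rw [Real.exp_neg]
    exact inv_anti₀ hP0 (exp_lb8 hq0)
  have h3 : (1 + q + q^2/2 + q^3/6 + q^4/24 + q^5/120 + q^6/720 + q^7/5040 + q^8/40320)⁻¹ < ρ - b := by
    rw [← one_div, div_lt_iff₀ hP0]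
    nlinarith
  calc Real.exp (-((π/2 + ζ) * ζ / s)) ≤ Real.exp (-q) := h1
    _ ≤ _ := h2
    _ < ρ - b := h3
    _ ≤ s - ζ := by linarith

private lemma key_small (ζ s : ℝ) (h1 : 0 < ζ) (h2 : ζ ≤ 0.35) (hs2 : s^2 = 1 - ζ^2)
    (hspos : 0 < s) : Real.exp (-((π/2 + ζ) * ζ / s)) < s - ζ := by
  have hpil : (3.141592 : ℝ) < π := Real.pi_gt_d6
  have hpiu : π < 3.141593 := Real.pi_lt_d6
  have hs93 : (0.93 : ℝ) ≤ s := by nlinarith [sq_nonneg (s - 0.93)]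
  have hs1 : s ≤ 1 := by nlinarith [sq_nonneg (s-1)]
  set x := (π/2 + ζ) * ζ / s with hx
  have hxpos : 0 < x := by positivity
  have h1x : (0:ℝ) < 1 + x := by linarith
  have h3 : Real.exp (-x) < (1 + x)⁻¹ := by
    rw [Real.exp_neg]
    apply inv_strictAnti₀ h1x
    linarith [Real.add_one_lt_exp (ne_of_gt hxpos)]
  have hkey : s ≤ (s - ζ) * (s + (π/2 + ζ) * ζ) := by
    nlinarith [sq_nonneg (s - 1 + ζ), sq_nonneg ζ, mul_pos h1 hspos]
  have hxs : x * s = (π/2 + ζ) * ζ := div_mul_cancel₀ _ (ne_of_gt hspos)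
  have h5 : 1 ≤ (s - ζ) * (1 + x) := by
    have h6 : ((s - ζ) * (1 + x)) * s = (s - ζ) * (s + (π/2 + ζ) * ζ) := by
      rw [← hxs]; ring
    nlinarith [hkey]
  have h4 : (1 + x)⁻¹ ≤ s - ζ := by
    rw [← one_div, div_le_iff₀ h1x]
    linarith
  linarith

private lemma key (ζ s : ℝ) (h1 : 0 < ζ) (h2 : ζ ≤ 0.6) (hs2 : s^2 = 1 - ζ^2)
    (hspos : 0 < s) : Real.exp (-((π/2 + ζ) * ζ / s)) < s - ζ := by
  rcases le_or_gt ζ ((35/100 : ℝ)) with h | hprev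
  · exact key_small ζ s h1 (by linarith) hs2 hspos
  rcases le_or_gt ζ ((392/1000 : ℝ)) with hb | hnext
  · exact step ζ s ((35/100 : ℝ)) ((392/1000 : ℝ)) ((3747/4000 : ℝ)) ((22999/25000 : ℝ)) ((897/1250 : ℝ)) hs2 hspos hprev.le hb
      (by norm_num) (by norm_num) (by norm_num) (by norm_num) (by norm_num) (by norm_num) (by norm_num) (by norm_num)
  clear hprev; have hprev := hnext
  rcases le_or_gt ζ ((456/1000 : ℝ)) with hb | hnext
  · exact step ζ s ((392/1000 : ℝ)) ((456/1000 : ℝ)) ((91997/100000 : ℝ)) ((88997/100000 : ℝ)) ((8363/10000 : ℝ)) hs2 hspos hprev.le hb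
      (by norm_num) (by norm_num) (by norm_num) (by norm_num) (by norm_num) (by norm_num) (by norm_num) (by norm_num)
  clear hprev; have hprev := hnext
  rcases le_or_gt ζ ((507/1000 : ℝ)) with hb | hnext
  · exact step ζ s ((456/1000 : ℝ)) ((507/1000 : ℝ)) ((44499/50000 : ℝ)) ((43097/50000 : ℝ)) ((649/625 : ℝ)) hs2 hspos hprev.le hb
      (by norm_num) (by norm_num) (by norm_num) (by norm_num) (by norm_num) (by norm_num) (by norm_num) (by norm_num)
  clear hprev; have hprev := hnext
  rcases le_or_gt ζ ((544/1000 : ℝ)) with hb | hnext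
  · exact step ζ s ((507/1000 : ℝ)) ((544/1000 : ℝ)) ((17239/20000 : ℝ)) ((20977/25000 : ℝ)) ((12221/10000 : ℝ)) hs2 hspos hprev.le hb
      (by norm_num) (by norm_num) (by norm_num) (by norm_num) (by norm_num) (by norm_num) (by norm_num) (by norm_num)
  clear hprev; have hprev := hnext
  rcases le_or_gt ζ ((568/1000 : ℝ)) with hb | hnext
  · exact step ζ s ((544/1000 : ℝ)) ((568/1000 : ℝ)) ((83909/100000 : ℝ)) ((41151/50000 : ℝ)) ((1371/1000 : ℝ)) hs2 hspos hprev.le hb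
      (by norm_num) (by norm_num) (by norm_num) (by norm_num) (by norm_num) (by norm_num) (by norm_num) (by norm_num)
  clear hprev; have hprev := hnext
  rcases le_or_gt ζ ((583/1000 : ℝ)) with hb | hnext
  · exact step ζ s ((568/1000 : ℝ)) ((583/1000 : ℝ)) ((82303/100000 : ℝ)) ((81247/100000 : ℝ)) ((14759/10000 : ℝ)) hs2 hspos hprev.le hb
      (by norm_num) (by norm_num) (by norm_num) (by norm_num) (by norm_num) (by norm_num) (by norm_num) (by norm_num)
  clear hprev; have hprev := hnext
  rcases le_or_gt ζ ((592/1000 : ℝ)) with hb | hnext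
  · exact step ζ s ((583/1000 : ℝ)) ((592/1000 : ℝ)) ((2539/3125 : ℝ)) ((80593/100000 : ℝ)) ((7727/5000 : ℝ)) hs2 hspos hprev.le hb
      (by norm_num) (by norm_num) (by norm_num) (by norm_num) (by norm_num) (by norm_num) (by norm_num) (by norm_num)
  clear hprev; have hprev := hnext
  rcases le_or_gt ζ ((597/1000 : ℝ)) with hb | hnext
  · exact step ζ s ((592/1000 : ℝ)) ((597/1000 : ℝ)) ((40297/50000 : ℝ)) ((2507/3125 : ℝ)) ((7943/5000 : ℝ)) hs2 hspos hprev.le hb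
      (by norm_num) (by norm_num) (by norm_num) (by norm_num) (by norm_num) (by norm_num) (by norm_num) (by norm_num)
  clear hprev; have hprev := hnext
  exact step ζ s ((597/1000 : ℝ)) ((6/10 : ℝ)) ((3209/4000 : ℝ)) ((4/5 : ℝ)) ((16131/10000 : ℝ)) hs2 hspos hprev.le (by norm_num; linarith)
      (by norm_num) (by norm_num) (by norm_num) (by norm_num) (by norm_num) (by norm_num) (by norm_num) (by norm_num)

/-- For damping ratio `0 < ζ ≤ 0.6`, the ellipse approximating the cardioid is
vertically oriented: `a(ζ) < b(ζ)`, where, with `β = arccos ζ`,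
`a(ζ) = e^{-β/tan β} cos β + e^{-π/tan β}` and `b(ζ) = e^{-β/tan β} sin β`. -/
theorem ellipse_vertical_of_small_damping (ζ : ℝ) (h1 : 0 < ζ) (h2 : ζ ≤ 0.6) :
    Real.exp (-(Real.arccos ζ) / Real.tan (Real.arccos ζ)) * Real.cos (Real.arccos ζ)
      + Real.exp (-Real.pi / Real.tan (Real.arccos ζ))
    < Real.exp (-(Real.arccos ζ) / Real.tan (Real.arccos ζ)) * Real.sin (Real.arccos ζ) := by
  have hζ1 : ζ < 1 := by linarith
  set β := Real.arccos ζ with hβdef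
  have hcos : Real.cos β = ζ := Real.cos_arccos (by linarith) (by linarith)
  have hsin : Real.sin β = Real.sqrt (1 - ζ^2) := by
    rw [hβdef, Real.sin_arccos]
  set s := Real.sqrt (1 - ζ^2) with hsdef
  have hs2 : s^2 = 1 - ζ^2 := Real.sq_sqrt (by nlinarith)
  have hspos : 0 < s := Real.sqrt_pos.mpr (by nlinarith)
  have htan : Real.tan β = s / ζ := by rw [Real.tan_eq_sin_div_cos, hcos, hsin]
  have hd1 : -β / Real.tan β = -(β * ζ) / s := by
    rw [htan]; field_simp
  have hd2 : -π / Real.tan β = -(π * ζ) / s := by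
    rw [htan]; field_simp
  rw [hcos, hsin, hd1, hd2]
  have hsplit : Real.exp (-(π * ζ) / s)
      = Real.exp (-(β * ζ) / s) * Real.exp (-((π - β) * ζ / s)) := by
    rw [← Real.exp_add]; congr 1; field_simp; ring
  rw [hsplit]
  have harcsin : ζ < Real.arcsin ζ := by
    have h := Real.sin_lt (Real.arcsin_pos.mpr h1)
    rwa [Real.sin_arcsin (by linarith) (by linarith)] at h
  have hβeq : β = π/2 - Real.arcsin ζ := Real.arccos_eq_pi_div_two_sub_arcsin ζ
  have hE : Real.exp (-((π - β) * ζ / s)) ≤ Real.exp (-((π/2 + ζ) * ζ / s)) := by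
    apply Real.exp_le_exp.mpr
    have hnum : (π/2 + ζ) * ζ ≤ (π - β) * ζ := by nlinarith
    have hdiv : (π/2 + ζ) * ζ / s ≤ (π - β) * ζ / s := (div_le_div_iff_of_pos_right hspos).mpr hnum
    linarith
  have hkey : Real.exp (-((π/2 + ζ) * ζ / s)) < s - ζ := key ζ s h1 h2 hs2 hspos
  nlinarith [Real.exp_pos (-(β * ζ) / s), hE, hkey]
end

section
/- Let T > 0 (sampling period) and 0 < β < π/2. The image under the map s ↦ exp(sT) of the set of complex numbers s = −σ + iω with σ ≥ 0, 0 ≤ ω, ωT < π and ω ≤ σ · tan β (the upper half of the cone of damping ratio at least cos β in the s-plane) equals the set of nonzero complex numbers z with 0 ≤ arg z < π and |z| ≤ exp(−(arg z)/tan β) (the upper half of the cardioid region in the z-plane). -/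
/-- Mapping the (upper half of the) cone of damping ratio at least `cos β` from
the `s`-plane onto the cardioid region in the `z`-plane: for sampling period
`T > 0` and `0 < β < π/2`, the image under `s ↦ exp(sT)` of
`{s = -σ + iω : σ ≥ 0, 0 ≤ ω, ωT < π, ω ≤ σ tan β}` equals
`{z ≠ 0 : 0 ≤ arg z < π, |z| ≤ exp(-(arg z)/tan β)}`. -/
theorem cone_maps_to_cardioid (T : ℝ) (hT : 0 < T) (β : ℝ)
    (hβ1 : 0 < β) (hβ2 : β < Real.pi / 2) :
    (fun s : ℂ => Complex.exp (s * (T : ℂ))) ''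
        {s : ℂ | s.re ≤ 0 ∧ 0 ≤ s.im ∧ s.im * T < Real.pi ∧ s.im ≤ (-s.re) * Real.tan β}
      = {z : ℂ | z ≠ 0 ∧ 0 ≤ z.arg ∧ z.arg < Real.pi ∧
          ‖z‖ ≤ Real.exp (-(z.arg) / Real.tan β)} := by
  have htan : 0 < Real.tan β := Real.tan_pos_of_pos_of_lt_pi_div_two hβ1 hβ2
  ext z
  simp only [Set.mem_image, Set.mem_setOf_eq]
  constructor
  · rintro ⟨s, ⟨hre, him, himT, hcone⟩, rfl⟩
    have hreT : (s * (T:ℂ)).re = s.re * T := by simp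
    have himT' : (s * (T:ℂ)).im = s.im * T := by simp
    have harg : (Complex.exp (s * (T:ℂ))).arg = s.im * T := by
      have h1 : -Real.pi < (s * (T:ℂ)).im := by
        rw [himT']; nlinarith [Real.pi_pos, mul_nonneg him hT.le]
      have h2 : (s * (T:ℂ)).im ≤ Real.pi := by rw [himT']; linarith
      rw [← Complex.log_im, Complex.log_exp h1 h2, himT']
    refine ⟨Complex.exp_ne_zero _, ?_, ?_, ?_⟩
    · rw [harg]; positivity
    · rw [harg]; exact himT
    · rw [harg, Complex.norm_exp, hreT, Real.exp_le_exp, neg_div, le_neg,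
        div_le_iff₀ htan]
      nlinarith [mul_nonneg him hT.le]
  · rintro ⟨hz, h0, hπ, habs⟩
    have hlogle : Real.log (‖z‖) ≤ -z.arg / Real.tan β := by
      calc Real.log (‖z‖) ≤ Real.log (Real.exp (-z.arg / Real.tan β)) :=
        Real.log_le_log (norm_pos_iff.mpr hz) habs
      _ = -z.arg / Real.tan β := Real.log_exp _
    have hlog0 : Real.log (‖z‖) ≤ 0 := by
      have : -z.arg / Real.tan β ≤ 0 :=
        div_nonpos_of_nonpos_of_nonneg (by linarith) htan.le
      linarith
    have him' : (Complex.log z / (T:ℂ)).im = z.arg / T := by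
      rw [Complex.div_im]
      simp only [Complex.ofReal_re, Complex.ofReal_im, Complex.log_im,
        Complex.normSq_ofReal]
      field_simp
      ring
    have hre' : (Complex.log z / (T:ℂ)).re = Real.log (‖z‖) / T := by
      rw [Complex.div_re]
      simp only [Complex.ofReal_re, Complex.ofReal_im, Complex.log_re,
        Complex.normSq_ofReal]
      field_simp
      ring
    refine ⟨Complex.log z / T, ⟨?_, ?_, ?_, ?_⟩, ?_⟩
    · rw [hre']
      exact div_nonpos_of_nonpos_of_nonneg hlog0 hT.le
    · rw [him']; positivity
    · rw [him', div_mul_cancel₀ _ hT.ne']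
      exact hπ
    · rw [him', hre']
      rw [le_div_iff₀ htan] at hlogle
      have key : z.arg ≤ -Real.log (‖z‖) * Real.tan β := by linarith
      rw [div_le_iff₀ hT]
      have heq : -(Real.log (‖z‖) / T) * Real.tan β * T
          = -Real.log (‖z‖) * Real.tan β := by field_simp
      rw [heq]; exact key
    · show Complex.exp (Complex.log z / T * T) = z
      rw [div_mul_cancel₀ _ (by exact_mod_cast hT.ne' : (T:ℂ) ≠ 0)]
      exact Complex.exp_log hz
end

section
/- Let λ be a real symmetric m×m matrix, β a real m×m matrix, and let D = {z ∈ ℂ : λ + βz + βᵀz̄ ⪰ 0} be the associated LMI region (positive semidefiniteness of the Hermitian matrix λ + βz + βᵀz̄). Let P be a real symmetric positive-definite n×n matrix and Q a real n×n matrix such that the Kronecker-product matrix M = λ ⊗ P + β ⊗ Q + βᵀ ⊗ Qᵀ is positive semidefinite. Then every (complex) eigenvalue of the matrix Â = Q P⁻¹ belongs to D. -/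
open Matrix ComplexOrder

open Kronecker

set_option linter.unusedSectionVars false

variable {ι κ : Type*} [Fintype ι] [Fintype κ] [DecidableEq ι] [DecidableEq κ]

private lemma cmap_mul (A B : Matrix ι ι ℝ) :
    (A * B).map (fun x : ℝ => (x : ℂ))
      = A.map (fun x : ℝ => (x : ℂ)) * B.map (fun x : ℝ => (x : ℂ)) := by
  exact Matrix.map_mul (f := Complex.ofRealHom)

private lemma cmap_conjTranspose (A : Matrix ι κ ℝ) :
    (A.map (fun x : ℝ => (x : ℂ)))ᴴ = Aᵀ.map (fun x : ℝ => (x : ℂ)) := by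
  ext i j
  simp [conjTranspose_apply]

private lemma cmap_posSemidef {M : Matrix ι ι ℝ}
    (hM : M.PosSemidef) : (M.map (fun x : ℝ => (x : ℂ))).PosSemidef := by
  obtain ⟨B, rfl⟩ : ∃ B : Matrix ι ι ℝ, M = Bᴴ * B := by
    open scoped MatrixOrder in exact CStarAlgebra.nonneg_iff_eq_star_mul_self.mp hM.nonneg
  rw [show Bᴴ = Bᵀ from rfl, cmap_mul, ← cmap_conjTranspose]
  exact posSemidef_conjTranspose_mul_self _

private lemma cmap_kron (A : Matrix ι ι ℝ) (B : Matrix κ κ ℝ) :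
    (A ⊗ₖ B).map (fun x : ℝ => (x : ℂ))
      = (A.map (fun x : ℝ => (x : ℂ))) ⊗ₖ (B.map (fun x : ℝ => (x : ℂ))) := by
  ext ⟨i, j⟩ ⟨k, l⟩
  simp

private lemma cmap_add (A B : Matrix ι κ ℝ) :
    (A + B).map (fun x : ℝ => (x : ℂ))
      = A.map (fun x : ℝ => (x : ℂ)) + B.map (fun x : ℝ => (x : ℂ)) := by
  ext i j
  simp

private lemma kron_quad (A : Matrix ι ι ℂ) (B : Matrix κ κ ℂ)
    (x : ι → ℂ) (u : κ → ℂ) :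
    star (fun p : ι × κ => x p.1 * u p.2) ⬝ᵥ ((A ⊗ₖ B) *ᵥ (fun p => x p.1 * u p.2))
      = (star x ⬝ᵥ A *ᵥ x) * (star u ⬝ᵥ B *ᵥ u) := by
  simp only [dotProduct, mulVec, Pi.star_apply, kroneckerMap_apply, Fintype.sum_prod_type]
  rw [Fintype.sum_mul_sum]
  apply Finset.sum_congr rfl
  intro i _
  apply Finset.sum_congr rfl
  intro j _
  simp only [Finset.mul_sum, Finset.sum_mul]
  rw [Finset.sum_comm]
  apply Finset.sum_congr rfl
  intro k _
  apply Finset.sum_congr rfl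
  intro l _
  rw [star_mul']
  ring

private lemma quad_conjTranspose (M : Matrix ι ι ℂ) (u : ι → ℂ) :
    star u ⬝ᵥ Mᴴ *ᵥ u = star (star u ⬝ᵥ M *ᵥ u) := by
  rw [star_dotProduct, star_mulVec, conjTranspose_conjTranspose, ← dotProduct_mulVec]

/-- Feasibility of the LMI constraint `λ ⊗ P + β ⊗ Q + βᵀ ⊗ Qᵀ ⪰ 0` with
`P = Pᵀ ≻ 0` implies that every complex eigenvalue `μ` of `Â = Q P⁻¹` lies in
the LMI region `D = {z : λ + β z + βᵀ z̄ ⪰ 0}`. -/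
theorem eigenvalues_in_LMI_region_of_feasible
    (m n : ℕ) (Λ β : Matrix (Fin m) (Fin m) ℝ) (hΛ : Λ.IsSymm)
    (P Q : Matrix (Fin n) (Fin n) ℝ) (hP : P.PosDef) (hPsymm : P.IsSymm)
    (hM : (Λ ⊗ₖ P + β ⊗ₖ Q + βᵀ ⊗ₖ Qᵀ).PosSemidef)
    (μ : ℂ) (hμ : μ ∈ spectrum ℂ ((Q * P⁻¹).map (fun x : ℝ => (x : ℂ)))) :
    (Λ.map (fun x : ℝ => (x : ℂ))
      + μ • β.map (fun x : ℝ => (x : ℂ))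
      + (starRingEnd ℂ) μ • (β.map (fun x : ℝ => (x : ℂ)))ᵀ).PosSemidef := by
  have hPdet : P.det ≠ 0 := hP.det_pos.ne'
  set Ac : Matrix (Fin n) (Fin n) ℂ := (Q * P⁻¹).map (fun x : ℝ => (x : ℂ)) with hAc
  -- eigenvector of the transpose
  rw [spectrum.mem_iff] at hμ
  have hdet : (algebraMap ℂ (Matrix (Fin n) (Fin n) ℂ) μ - Ac).det = 0 := by
    by_contra h
    exact hμ ((Matrix.isUnit_iff_isUnit_det _).mpr (isUnit_iff_ne_zero.mpr h))
  have hdetT : ((algebraMap ℂ (Matrix (Fin n) (Fin n) ℂ) μ - Ac)ᵀ).det = 0 := by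
    rw [Matrix.det_transpose]; exact hdet
  obtain ⟨s, hs0, hsv⟩ := (Matrix.exists_mulVec_eq_zero_iff).mpr hdetT
  have heig : s ᵥ* Ac = μ • s := by
    rw [← mulVec_transpose]
    have h1 : (algebraMap ℂ (Matrix (Fin n) (Fin n) ℂ) μ - Ac)ᵀ *ᵥ s = μ • s - Acᵀ *ᵥ s := by
      rw [transpose_sub, Matrix.sub_mulVec]
      congr 1
      rw [Algebra.algebraMap_eq_smul_one, transpose_smul, transpose_one, smul_mulVec,
        one_mulVec]
    rw [h1] at hsv
    exact (sub_eq_zero.mp hsv).symm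
  set u : Fin n → ℂ := star s with hu
  have hsu : star u = s := star_star s
  set Pc : Matrix (Fin n) (Fin n) ℂ := P.map (fun x : ℝ => (x : ℂ)) with hPc
  set Qc : Matrix (Fin n) (Fin n) ℂ := Q.map (fun x : ℝ => (x : ℂ)) with hQc
  set p : ℂ := star u ⬝ᵥ Pc *ᵥ u with hp
  have hPcpsd : Pc.PosSemidef := cmap_posSemidef hP.posSemidef
  have hp0 : 0 ≤ p := hPcpsd.dotProduct_mulVec_nonneg u
  have hPcdet : Pc.det ≠ 0 := by
    have hdd : Pc.det = (P.det : ℂ) := by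
      rw [hPc, show P.map (fun x : ℝ => (x : ℂ)) = Complex.ofRealHom.mapMatrix P from rfl,
        ← RingHom.map_det]
      rfl
    rw [hdd]
    simpa using hPdet
  have hu0 : u ≠ 0 := by
    intro h'
    apply hs0
    rw [← star_star s, ← hu, h', star_zero]
  have hpne : p ≠ 0 := by
    intro h
    have h2 : Pc *ᵥ u = 0 := (hPcpsd.dotProduct_mulVec_zero_iff u).mp h
    exact hPcdet (Matrix.exists_mulVec_eq_zero_iff.mp ⟨u, hu0, h2⟩)
  have hppos : 0 < p := lt_of_le_of_ne hp0 (Ne.symm hpne)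
  have hpim : p.im = 0 := ((Complex.le_def).mp hp0).2.symm
  have hpre : 0 < p.re := by
    rcases (Complex.lt_def).mp hppos with ⟨h1, _⟩
    simpa using h1
  have hpstar : star p = p := by
    rw [Complex.star_def, Complex.conj_eq_iff_im]
    exact hpim
  -- quadratic values of Q and Qᵀ
  have hQAP : Q = (Q * P⁻¹) * P := by
    rw [mul_assoc, Matrix.nonsing_inv_mul P (isUnit_iff_ne_zero.mpr hPdet), mul_one]
  have hqQ : star u ⬝ᵥ Qc *ᵥ u = μ * p := by
    conv_lhs => rw [hQc, hQAP, cmap_mul, ← hAc, ← hPc]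
    rw [dotProduct_mulVec, ← Matrix.vecMul_vecMul, hsu, heig, ← dotProduct_mulVec,
      smul_dotProduct, smul_eq_mul, dotProduct_mulVec, ← hsu, ← dotProduct_mulVec, ← hp]
  have hqQT : star u ⬝ᵥ (Qᵀ.map (fun x : ℝ => (x : ℂ))) *ᵥ u = star μ * p := by
    rw [← cmap_conjTranspose, quad_conjTranspose, ← hQc, hqQ, star_mul', hpstar]
  -- positive semidefiniteness
  rw [posSemidef_iff_dotProduct_mulVec]
  constructor
  · show _ = _
    ext i j
    have hsr : ∀ r : ℝ, star (r : ℂ) = (r : ℂ) := fun r => by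
      rw [Complex.star_def, Complex.conj_ofReal]
    simp only [conjTranspose_apply, Matrix.add_apply, Matrix.smul_apply, Matrix.map_apply,
      Matrix.transpose_apply, smul_eq_mul, star_add, star_mul', starRingEnd_apply,
      star_star, hsr]
    rw [hΛ.apply i j]
    ring
  · intro x
    set βc : Matrix (Fin m) (Fin m) ℂ := β.map (fun x : ℝ => (x : ℂ)) with hβc
    set Λc : Matrix (Fin m) (Fin m) ℂ := Λ.map (fun x : ℝ => (x : ℂ)) with hΛc
    set w : Fin m × Fin n → ℂ := fun pq => x pq.1 * u pq.2 with hw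
    have h0 : 0 ≤ star w ⬝ᵥ ((Λ ⊗ₖ P + β ⊗ₖ Q + βᵀ ⊗ₖ Qᵀ).map (fun x : ℝ => (x : ℂ))) *ᵥ w :=
      (cmap_posSemidef hM).dotProduct_mulVec_nonneg w
    rw [cmap_add, cmap_add, cmap_kron, cmap_kron, cmap_kron, add_mulVec, add_mulVec,
      dotProduct_add, dotProduct_add, kron_quad, kron_quad, kron_quad,
      ← hΛc, ← hβc, ← hPc, ← hQc, ← hp, hqQ, hqQT] at h0
    -- h0 : 0 ≤ (star x ⬝ᵥ Λc *ᵥ x) * p + (star x ⬝ᵥ βc *ᵥ x) * (μ * p)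
    --        + (star x ⬝ᵥ βᵀc *ᵥ x) * (star μ * p)
    have hβT : βᵀ.map (fun x : ℝ => (x : ℂ)) = βcᵀ := by
      rw [hβc]; exact Matrix.transpose_map
    rw [hβT] at h0
    set T : ℂ := star x ⬝ᵥ (Λc + μ • βc + (starRingEnd ℂ) μ • βcᵀ) *ᵥ x with hT
    show 0 ≤ T
    have hTp : T * p = (star x ⬝ᵥ Λc *ᵥ x) * p + (star x ⬝ᵥ βc *ᵥ x) * (μ * p)
        + (star x ⬝ᵥ βcᵀ *ᵥ x) * (star μ * p) := by
      rw [hT, add_mulVec, add_mulVec, dotProduct_add, dotProduct_add,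
        smul_mulVec, smul_mulVec, dotProduct_smul, dotProduct_smul,
        smul_eq_mul, smul_eq_mul, starRingEnd_apply]
      ring
    rw [← hTp] at h0
    rw [Complex.le_def] at h0 ⊢
    constructor
    · have h1 : 0 ≤ (T * p).re := by simpa using h0.1
      rw [Complex.mul_re, hpim] at h1
      simp only [Complex.zero_re]
      nlinarith
    · have h2 : (T * p).im = 0 := by simpa using h0.2.symm
      rw [Complex.mul_im, hpim] at h2
      simp only [Complex.zero_im]
      nlinarith
end
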